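/- For d = 4: a sequence of real numbers satisfying a_{i+3} = 1 - a_{i+2}/(1 - a_{i+1}/(1 - a_i)) (with all relevant denominators nonzero) is 6-periodic: a_{i+6} = a_i for all i. -/

import Mathlib

/-- Case `d = 4`: a sequence of real numbers satisfying the depth-2 continued fraction
recurrence `a_{i+3} = 1 - a_{i+2}/(1 - a_{i+1}/(1 - a_i))`, with all relevant
denominators nonzero (`1 - a_i ≠ 0` and `1 - a_i - a_{i+1} ≠ 0` for all `i ≥ 1`),
is `6`-periodic: `a_{i+6} = a_i` for all `i ≥ 1`. -/
theorem lyness_six_cycle (a : ℕ → ℝ)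
    (hne1 : ∀ i, 1 ≤ i → 1 - a i ≠ 0)
    (hne2 : ∀ i, 1 ≤ i → 1 - a i - a (i + 1) ≠ 0)
    (hrec : ∀ i, 1 ≤ i → a (i + 3) = 1 - a (i + 2) / (1 - a (i + 1) / (1 - a i))) :
    ∀ i, 1 ≤ i → a (i + 6) = a i := by
  have key : ∀ i, 1 ≤ i → a (i + 3) = 1 - a (i + 2) * (1 - a i) / (1 - a i - a (i + 1)) := by
    intro i hi
    rw [hrec i hi]
    have n1 := hne1 i hi
    have m1 := hne2 i hi
    field_simp
  intro i hi
  have h3 := key i hi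
  have h4 := key (i + 1) (by omega)
  have h5 := key (i + 2) (by omega)
  have h6 := key (i + 3) (by omega)
  simp only [show i + 1 + 3 = i + 4 by omega, show i + 1 + 2 = i + 3 by omega,
    show i + 1 + 1 = i + 2 by omega] at h4
  simp only [show i + 2 + 3 = i + 5 by omega, show i + 2 + 2 = i + 4 by omega,
    show i + 2 + 1 = i + 3 by omega] at h5
  simp only [show i + 3 + 3 = i + 6 by omega, show i + 3 + 2 = i + 5 by omega,
    show i + 3 + 1 = i + 4 by omega] at h6
  have n1 := hne1 i hi
  have n2 := hne1 (i + 1) (by omega)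
  have n3 := hne1 (i + 2) (by omega)
  have m1 := hne2 i hi
  have m2 := hne2 (i + 1) (by omega)
  have m3 := hne2 (i + 2) (by omega)
  have m4 := hne2 (i + 3) (by omega)
  simp only [show i + 1 + 1 = i + 2 by omega, show i + 2 + 1 = i + 3 by omega,
    show i + 3 + 1 = i + 4 by omega] at m2 m3 m4
  -- closed form for a (i+4)
  have h4' : a (i + 4) = a i * a (i + 1) * a (i + 2) /
      ((1 - a i - a (i + 1)) * (1 - a (i + 1) - a (i + 2))) := by
    rw [h4, h3]; field_simp; ring
  -- 1 - a(i+2) - a(i+3) as a fraction, giving a(i+1)*a(i+2) ≠ 0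
  have e3 : 1 - a (i + 2) - a (i + 3) = a (i + 1) * a (i + 2) / (1 - a i - a (i + 1)) := by
    rw [h3]; field_simp; ring
  have hyz : a (i + 1) * a (i + 2) ≠ 0 := by
    intro h; apply m3; rw [e3, h, zero_div]
  have hy : a (i + 1) ≠ 0 := left_ne_zero_of_mul hyz
  have hz : a (i + 2) ≠ 0 := right_ne_zero_of_mul hyz
  -- closed form for a (i+5)
  have h5' : a (i + 5) = 1 - a i * (1 - a (i + 2)) / (1 - a (i + 1) - a (i + 2)) := by
    rw [h5, e3, h4']; field_simp
  -- 1 - a(i+3) - a(i+4) as a fraction, giving N ≠ 0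
  have e4 : 1 - a (i + 3) - a (i + 4) =
      a (i + 2) * (1 - a i - a (i + 1) - a (i + 2) + a i * a (i + 2)) /
        ((1 - a i - a (i + 1)) * (1 - a (i + 1) - a (i + 2))) := by
    rw [h3, h4']; field_simp; ring
  have hN : 1 - a i - a (i + 1) - a (i + 2) + a i * a (i + 2) ≠ 0 := by
    intro h; apply m4; rw [e4, h, mul_zero, zero_div]
  -- 1 - a(i+3)
  have e3' : 1 - a (i + 3) = a (i + 2) * (1 - a i) / (1 - a i - a (i + 1)) := by
    rw [h3]; field_simp; ring
  rw [h6, e4, e3', h5']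
  field_simp
  ring
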